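/- Define a map ϖ_a : k𝒞₊ → k𝒞 on basis elements by ϖ_a(α) = π_a(α) if α(1) = 1 and ϖ_a(α) = 0 if α(1) ≠ 1, extended k-linearly. Then ϖ_a is a surjective k-algebra homomorphism whose kernel is the span ℑ_a of the morphisms α with α(1) ≠ 1; hence k𝒞₊/ℑ_a ≅ k𝒞. -/

import Mathlib

/-- Morphisms of the category with objects `[o m]` and strictly increasing maps;
`o = fun m => m + 1` gives `𝒞₊`, and `o = id` gives `𝒞`. -/
def MorF (o : ℕ → ℕ) : Type := Σ m n : ℕ, Fin (o m) ↪o Fin (o n)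

variable {o : ℕ → ℕ} (k : Type) [CommRing k]

/-- Product of two basis elements of the category algebra. -/
noncomputable def mulB (a b : MorF o) : MorF o →₀ k :=
  if h : b.2.1 = a.1 then
    Finsupp.single ⟨b.1, a.2.1, (h ▸ b.2.2 : Fin (o b.1) ↪o Fin (o a.1)).trans a.2.2⟩ 1
  else 0

/-- The multiplication of the category algebra, extended bilinearly. -/
noncomputable def algMul (x y : MorF o →₀ k) : MorF o →₀ k :=
  x.sum fun a c => y.sum fun b d => (c * d) • mulB k a b

/-- `π_a` on a strictly increasing map `[m+1] → [n+1]`: `i ↦ α(i+1) - 1`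
(well defined since `α(i+1) > α(0) ≥ 0`). -/
def piAEmb {m n : ℕ} (f : Fin (m + 1) ↪o Fin (n + 1)) : Fin m ↪o Fin n :=
  OrderEmbedding.ofStrictMono
    (fun i => (f i.succ).pred (Fin.pos_iff_ne_zero.mp
      (lt_of_le_of_lt (Fin.zero_le _) (f.strictMono (Fin.succ_pos i)))))
    (by
      intro i j h
      have h1 := Fin.lt_def.mp (f.strictMono (Fin.succ_lt_succ_iff.mpr h))
      have h2 := Fin.lt_def.mp (f.strictMono (Fin.succ_pos i))
      simp only [Fin.lt_def, Fin.coe_pred]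
      omega)

/-- The value of `ϖ_a` on a basis morphism: `π_a(α)` if `α(1) = 1`, and `0`
otherwise. -/
noncomputable def varpiBasis (a : MorF (fun m => m + 1)) : MorF id →₀ k :=
  if a.2.2 0 = 0 then Finsupp.single ⟨a.1, a.2.1, piAEmb a.2.2⟩ 1 else 0

/-- The `k`-linear map `ϖ_a : k𝒞₊ → k𝒞`. -/
noncomputable def varpiA : (MorF (fun m => m + 1) →₀ k) →ₗ[k] (MorF id →₀ k) :=
  Finsupp.lsum k fun a => LinearMap.toSpanSingleton k _ (varpiBasis k a)

/-- The `k`-submodule `ℑ_a` spanned by the morphisms `α` with `α(1) ≠ 1`. -/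
noncomputable def IdealA : Submodule k (MorF (fun m => m + 1) →₀ k) :=
  Submodule.span k
    {x | ∃ a : MorF (fun m => m + 1), a.2.2 0 ≠ 0 ∧ x = Finsupp.single a 1}

def liftEmb {m n : ℕ} (f : Fin m ↪o Fin n) : Fin (m + 1) ↪o Fin (n + 1) :=
  OrderEmbedding.ofStrictMono
    (fun i => Fin.cases 0 (fun j => (f j).succ) i)
    (by
      intro i j h
      induction i using Fin.cases with
      | zero =>
        induction j using Fin.cases with
        | zero => exact absurd h (lt_irrefl _)
        | succ j => exact Fin.succ_pos _
      | succ i =>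
        induction j using Fin.cases with
        | zero => exact absurd h (by simp [Fin.lt_def])
        | succ j =>
          simpa using f.strictMono (Fin.succ_lt_succ_iff.mp h))

lemma piAEmb_apply {m n : ℕ} (f : Fin (m + 1) ↪o Fin (n + 1)) (i : Fin m) :
    (piAEmb f i : ℕ) = (f i.succ : ℕ) - 1 := rfl

lemma liftEmb_zero {m n : ℕ} (f : Fin m ↪o Fin n) : liftEmb f 0 = 0 := rfl

lemma liftEmb_succ {m n : ℕ} (f : Fin m ↪o Fin n) (i : Fin m) :
    liftEmb f i.succ = (f i).succ := rfl

lemma piAEmb_liftEmb {m n : ℕ} (f : Fin m ↪o Fin n) : piAEmb (liftEmb f) = f := by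
  ext i
  simp [piAEmb_apply, liftEmb_succ, Fin.val_succ]

lemma liftEmb_piAEmb {m n : ℕ} (f : Fin (m + 1) ↪o Fin (n + 1)) (h : f 0 = 0) :
    liftEmb (piAEmb f) = f := by
  ext i
  induction i using Fin.cases with
  | zero => simp [liftEmb_zero, h]
  | succ i =>
    rw [liftEmb_succ]
    simp [piAEmb, OrderEmbedding.ofStrictMono, Fin.succ_pred]

lemma piAEmb_trans {l m n : ℕ} (g : Fin (l + 1) ↪o Fin (m + 1))
    (f : Fin (m + 1) ↪o Fin (n + 1)) (hg : g 0 = 0) :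
    piAEmb (g.trans f) = (piAEmb g).trans (piAEmb f) := by
  ext i
  have h0 : g i.succ ≠ 0 := by
    intro h
    exact absurd (g.injective (h.trans hg.symm)) (Fin.succ_ne_zero i)
  simp only [piAEmb_apply, RelEmbedding.coe_trans, Function.comp_apply]
  rw [show (piAEmb g) i = (g i.succ).pred h0 from Fin.val_injective rfl]
  rw [show ((g i.succ).pred h0).succ = g i.succ from Fin.succ_pred _ _]
lemma algMul_single_single (a b : MorF o) (c d : k) :
    algMul k (Finsupp.single a c) (Finsupp.single b d) = (c * d) • mulB k a b := by
  rw [algMul, Finsupp.sum_single_index, Finsupp.sum_single_index]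
  · simp
  · simp [Finsupp.sum_single_index]

lemma algMul_zero_left (y : MorF o →₀ k) : algMul k 0 y = 0 := by
  simp [algMul]

lemma algMul_zero_right (x : MorF o →₀ k) : algMul k x 0 = 0 := by
  simp [algMul]

lemma algMul_add_left (x x' y : MorF o →₀ k) :
    algMul k (x + x') y = algMul k x y + algMul k x' y := by
  classical
  rw [algMul, Finsupp.sum_add_index]
  · rfl
  · simp
  · intro a _ c c'
    simp [add_mul, add_smul, Finsupp.sum_add]

lemma algMul_add_right (x y y' : MorF o →₀ k) :
    algMul k x (y + y') = algMul k x y + algMul k x y' := by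
  classical
  rw [algMul, show (fun (a : MorF o) (c : k) => (y + y').sum fun b d => (c * d) • mulB k a b)
      = fun a c => (y.sum fun b d => (c * d) • mulB k a b)
        + (y'.sum fun b d => (c * d) • mulB k a b) from ?_, Finsupp.sum_add]
  · rfl
  · funext a c
    rw [Finsupp.sum_add_index] <;> simp [mul_add, add_smul]

lemma algMul_smul_left (c : k) (x y : MorF o →₀ k) :
    algMul k (c • x) y = c • algMul k x y := by
  rw [algMul, Finsupp.sum_smul_index, algMul, Finsupp.smul_sum]
  · refine Finsupp.sum_congr fun a _ => ?_
    rw [Finsupp.smul_sum]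
    refine Finsupp.sum_congr fun b _ => ?_
    rw [smul_smul]; ring_nf
  · simp

lemma algMul_smul_right (c : k) (x y : MorF o →₀ k) :
    algMul k x (c • y) = c • algMul k x y := by
  rw [algMul, algMul, Finsupp.smul_sum]
  refine Finsupp.sum_congr fun a d => ?_
  rw [Finsupp.sum_smul_index, Finsupp.smul_sum]
  · refine Finsupp.sum_congr fun b _ => ?_
    rw [smul_smul]; ring_nf
  · simp

lemma varpiA_single (a : MorF (fun m => m + 1)) (c : k) :
    varpiA k (Finsupp.single a c) = c • varpiBasis k a := by
  simp [varpiA]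

lemma varpiA_key (a b : MorF (fun m => m + 1)) :
    varpiA k (mulB k a b) = algMul k (varpiBasis k a) (varpiBasis k b) := by
  obtain ⟨m₁, n₁, f⟩ := a
  obtain ⟨m₂, n₂, g⟩ := b
  by_cases h : n₂ = m₁
  · subst h
    rw [show mulB k (⟨n₂, n₁, f⟩ : MorF (fun m => m + 1)) ⟨m₂, n₂, g⟩
        = Finsupp.single ⟨m₂, n₁, g.trans f⟩ 1 from dif_pos rfl]
    by_cases hg : g 0 = 0
    · by_cases hf : f 0 = 0
      · have hc : (g.trans f) 0 = 0 := by
          show f (g 0) = 0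
          rw [hg, hf]
        erw [varpiA_single, varpiBasis, if_pos hc,
          show varpiBasis k ⟨n₂, n₁, f⟩ = Finsupp.single ⟨n₂, n₁, piAEmb f⟩ 1 from if_pos hf,
          show varpiBasis k ⟨m₂, n₂, g⟩ = Finsupp.single ⟨m₂, n₂, piAEmb g⟩ 1 from if_pos hg,
          algMul_single_single,
          show mulB k (⟨n₂, n₁, piAEmb f⟩ : MorF id) ⟨m₂, n₂, piAEmb g⟩
            = Finsupp.single ⟨m₂, n₁, (piAEmb g).trans (piAEmb f)⟩ 1 from dif_pos rfl]
        rw [piAEmb_trans g f hg]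
        simp
      · have hc : (g.trans f) 0 ≠ 0 := by
          show f (g 0) ≠ 0
          rw [hg]; exact hf
        erw [varpiA_single, varpiBasis, if_neg hc,
          show varpiBasis k ⟨n₂, n₁, f⟩ = 0 from if_neg hf, algMul_zero_left]
        simp
    · have hc : (g.trans f) 0 ≠ 0 := by
        show f (g 0) ≠ 0
        have := f.strictMono (Fin.pos_iff_ne_zero.mpr hg)
        exact Fin.pos_iff_ne_zero.mp (lt_of_le_of_lt (Fin.zero_le _) this)
      erw [varpiA_single, varpiBasis, if_neg hc,
        show varpiBasis k ⟨m₂, n₂, g⟩ = 0 from if_neg hg, algMul_zero_right]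
      simp
  · rw [show mulB k (⟨m₁, n₁, f⟩ : MorF (fun m => m + 1)) ⟨m₂, n₂, g⟩ = 0 from dif_neg h,
      map_zero]
    by_cases hf : f 0 = 0
    · by_cases hg : g 0 = 0
      · erw [show varpiBasis k ⟨m₁, n₁, f⟩ = Finsupp.single ⟨m₁, n₁, piAEmb f⟩ 1 from if_pos hf,
          show varpiBasis k ⟨m₂, n₂, g⟩ = Finsupp.single ⟨m₂, n₂, piAEmb g⟩ 1 from if_pos hg,
          algMul_single_single,
          show mulB k (⟨m₁, n₁, piAEmb f⟩ : MorF id) ⟨m₂, n₂, piAEmb g⟩ = 0 from dif_neg h,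
          smul_zero]
      · rw [show varpiBasis k ⟨m₂, n₂, g⟩ = 0 from if_neg hg, algMul_zero_right]
    · rw [show varpiBasis k ⟨m₁, n₁, f⟩ = 0 from if_neg hf, algMul_zero_left]

lemma varpiA_mul (x y : MorF (fun m => m + 1) →₀ k) :
    varpiA k (algMul k x y) = algMul k (varpiA k x) (varpiA k y) := by
  induction x using Finsupp.induction_linear with
  | zero => rw [algMul_zero_left, map_zero, algMul_zero_left]
  | add x x' hx hx' => rw [algMul_add_left, map_add, map_add, algMul_add_left, hx, hx']
  | single a c =>
    induction y using Finsupp.induction_linear with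
    | zero => rw [algMul_zero_right, map_zero, algMul_zero_right]
    | add y y' hy hy' => rw [algMul_add_right, map_add, map_add, algMul_add_right, hy, hy']
    | single b d =>
      rw [algMul_single_single, map_smul, varpiA_key, varpiA_single, varpiA_single,
        algMul_smul_left, algMul_smul_right, smul_smul]

def liftS (s : MorF id) : MorF (fun m => m + 1) := ⟨s.1, s.2.1, liftEmb s.2.2⟩

lemma varpiBasis_liftS (s : MorF id) : varpiBasis k (liftS s) = Finsupp.single s 1 := by
  obtain ⟨m, n, f⟩ := s
  rw [show varpiBasis k (liftS ⟨m, n, f⟩) = Finsupp.single ⟨m, n, piAEmb (liftEmb f)⟩ 1 from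
    if_pos (liftEmb_zero f), piAEmb_liftEmb]

lemma varpiA_surj : Function.Surjective (varpiA k) := by
  intro y
  induction y using Finsupp.induction_linear with
  | zero => exact ⟨0, map_zero _⟩
  | add y y' hy hy' =>
    obtain ⟨u, hu⟩ := hy
    obtain ⟨v, hv⟩ := hy'
    exact ⟨u + v, by rw [map_add, hu, hv]⟩
  | single s c =>
    refine ⟨Finsupp.single (liftS s) c, ?_⟩
    rw [varpiA_single, varpiBasis_liftS, Finsupp.smul_single, smul_eq_mul, mul_one]

noncomputable def sigmaL : (MorF id →₀ k) →ₗ[k] (MorF (fun m => m + 1) →₀ k) :=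
  Finsupp.lmapDomain k k liftS

lemma sub_sigma_mem (x : MorF (fun m => m + 1) →₀ k) :
    x - sigmaL k (varpiA k x) ∈ IdealA k := by
  induction x using Finsupp.induction_linear with
  | zero => rw [map_zero, map_zero, sub_zero]; exact zero_mem _
  | add x x' hx hx' =>
    have : x + x' - sigmaL k (varpiA k (x + x'))
        = (x - sigmaL k (varpiA k x)) + (x' - sigmaL k (varpiA k x')) := by
      rw [map_add, map_add]; abel
    rw [this]
    exact add_mem hx hx'
  | single a c =>
    by_cases h : a.2.2 0 = 0
    · obtain ⟨m, n, f⟩ := a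
      erw [varpiA_single,
        show varpiBasis k ⟨m, n, f⟩ = Finsupp.single ⟨m, n, piAEmb f⟩ 1 from if_pos h,
        map_smul, sigmaL, Finsupp.lmapDomain_apply, Finsupp.mapDomain_single,
        show liftS ⟨m, n, piAEmb f⟩ = ⟨m, n, f⟩ by
          show (⟨m, n, liftEmb (piAEmb f)⟩ : MorF (fun m => m + 1)) = ⟨m, n, f⟩
          rw [liftEmb_piAEmb f h],
        Finsupp.smul_single, smul_eq_mul, mul_one, sub_self]
      exact zero_mem _
    · rw [varpiA_single, show varpiBasis k a = 0 from if_neg h, smul_zero, map_zero, sub_zero,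
        show Finsupp.single a c = c • Finsupp.single a 1 by rw [Finsupp.smul_single, smul_eq_mul, mul_one]]
      exact Submodule.smul_mem _ c (Submodule.subset_span ⟨a, h, rfl⟩)

lemma varpiA_ker : LinearMap.ker (varpiA k) = IdealA k := by
  apply le_antisymm
  · intro x hx
    have h := sub_sigma_mem k x
    rwa [LinearMap.mem_ker.mp hx, map_zero, sub_zero] at h
  · rw [IdealA, Submodule.span_le]
    rintro _ ⟨a, ha, rfl⟩
    rw [SetLike.mem_coe, LinearMap.mem_ker, varpiA_single,
      show varpiBasis k a = 0 from if_neg ha, smul_zero]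

/-- `ϖ_a` is a surjective multiplicative `k`-linear map
(i.e. an algebra homomorphism) with kernel `ℑ_a`; hence `k𝒞₊/ℑ_a ≅ k𝒞`. -/
theorem varpiA_hom :
    (∀ x y : MorF (fun m => m + 1) →₀ k,
      varpiA k (algMul k x y) = algMul k (varpiA k x) (varpiA k y)) ∧
    Function.Surjective (varpiA k) ∧
    LinearMap.ker (varpiA k) = IdealA k ∧
    Nonempty (((MorF (fun m => m + 1) →₀ k) ⧸ IdealA k) ≃ₗ[k] (MorF id →₀ k)) := by
  refine ⟨varpiA_mul k, varpiA_surj k, varpiA_ker k,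
    ⟨(Submodule.quotEquivOfEq _ _ (varpiA_ker k).symm).trans
      ((varpiA k).quotKerEquivOfSurjective (varpiA_surj k))⟩⟩
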